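/- ∑_{n=1}^∞ ( ∑_{k=1}^n 1/(k−1/2)^2 ) / (n−1/2)^3 = (1/2)·t(5) + (3/7)·t(2)·t(3), where t(s) := ∑_{n=1}^∞ 1/(n−1/2)^s. -/

import Mathlib

open Filter Finset

/-- Single t-value `t(s) = ∑_{n=1}^∞ 1/(n-1/2)^s` (indexed by `n = m+1`, so `n-1/2 = m+1/2`). -/
noncomputable def tval (s : ℕ) : ℝ := ∑' m : ℕ, 1 / ((m : ℝ) + 1/2) ^ s

namespace T5aux

/-- half-integers -/
noncomputable def xh (m : ℕ) : ℝ := (m : ℝ) + 1/2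

lemma xh_pos (m : ℕ) : 0 < xh m := by
  have : (0:ℝ) ≤ (m:ℝ) := Nat.cast_nonneg m
  unfold xh; linarith

lemma xh_ne (m : ℕ) : xh m ≠ 0 := (xh_pos m).ne'

lemma xh_add (j e : ℕ) : xh (j + e) = xh j + e := by
  unfold xh; push_cast; ring

lemma xh_mono {j k : ℕ} (h : j ≤ k) : xh j ≤ xh k := by
  unfold xh
  have : (j:ℝ) ≤ (k:ℝ) := Nat.cast_le.2 h
  linarith

lemma xh_le_two_inv (m : ℕ) : 1 / xh m ≤ 2 := by
  have h : (1:ℝ)/2 ≤ xh m := by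
    have : (0:ℝ) ≤ (m:ℝ) := Nat.cast_nonneg m
    unfold xh; linarith
  calc 1 / xh m ≤ 1 / (1/2 : ℝ) := one_div_le_one_div_of_le (by norm_num) h
    _ = 2 := by norm_num

lemma tval_eq (s : ℕ) : tval s = ∑' m : ℕ, 1 / xh m ^ s := rfl

/-- summability of `1/(n+1)^b` -/
lemma summable_shift_pow {b : ℕ} (hb : 2 ≤ b) :
    Summable (fun m : ℕ => 1 / ((m:ℝ) + 1) ^ b) := by
  have h := (summable_nat_add_iff (f := fun n : ℕ => 1 / (n:ℝ) ^ b) 1).2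
    (Real.summable_one_div_nat_pow.2 (by omega))
  simpa using h

lemma summable_xh {s : ℕ} (hs : 2 ≤ s) : Summable (fun m : ℕ => 1 / xh m ^ s) := by
  refine Summable.of_nonneg_of_le (fun n => by have := xh_pos n; positivity) (fun n => ?_)
    ((summable_shift_pow (b := 2) le_rfl).mul_left (2 ^ s))
  have hn1 : (1:ℝ) ≤ (n:ℝ) + 1 := by
    have : (0:ℝ) ≤ (n:ℝ) := Nat.cast_nonneg n
    linarith
  have h1 : ((n:ℝ)+1)/2 ≤ xh n := by
    have : (0:ℝ) ≤ (n:ℝ) := Nat.cast_nonneg n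
    unfold xh; linarith
  have h2 : ((n:ℝ)+1)^2 / 2^s ≤ xh n ^ s := by
    calc ((n:ℝ)+1)^2 / 2^s ≤ ((n:ℝ)+1)^s / 2^s := by
          gcongr
      _ = (((n:ℝ)+1)/2)^s := by rw [div_pow]
      _ ≤ xh n ^ s := pow_le_pow_left₀ (by positivity) h1 s
  calc 1 / xh n ^ s ≤ 1 / (((n:ℝ)+1)^2 / 2^s) :=
        one_div_le_one_div_of_le (by positivity) h2
    _ = 2^s * (1/((n:ℝ)+1)^2) := by
        rw [one_div_div, div_eq_mul_one_div]

lemma summable_xh_shift {s : ℕ} (hs : 2 ≤ s) (d : ℕ) :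
    Summable (fun j : ℕ => 1 / xh (j + d) ^ s) :=
  (summable_nat_add_iff d).2 (summable_xh hs)

/-- tail formula -/
lemma tsum_shift {s : ℕ} (hs : 2 ≤ s) (d : ℕ) :
    ∑' j : ℕ, 1 / xh (j + d) ^ s = (∑' j : ℕ, 1 / xh j ^ s) - ∑ i ∈ range d, 1 / xh i ^ s := by
  have h := Summable.sum_add_tsum_nat_add (f := fun j : ℕ => 1 / xh j ^ s) d (summable_xh hs)
  linarith

/-- telescoping for powers ≥ 2 -/
lemma tele_pow {s : ℕ} (hs : 2 ≤ s) (d : ℕ) :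
    ∑' j : ℕ, (1 / xh j ^ s - 1 / xh (j + d) ^ s) = ∑ i ∈ range d, 1 / xh i ^ s := by
  rw [Summable.tsum_sub (summable_xh hs) (summable_xh_shift hs d), tsum_shift hs d]
  ring

lemma summable_tele_one (d : ℕ) :
    Summable (fun j : ℕ => 1 / xh j - 1 / xh (j + d)) := by
  refine Summable.of_nonneg_of_le (fun j => ?_) (fun j => ?_)
    ((summable_xh (s := 2) le_rfl).mul_left (d:ℝ))
  · have := xh_mono (Nat.le_add_right j d)
    have h1 := xh_pos j
    have h2 := xh_pos (j+d)
    have : 1 / xh (j+d) ≤ 1 / xh j := one_div_le_one_div_of_le h1 this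
    linarith
  · have h1 := xh_pos j
    have h2 := xh_pos (j+d)
    have key : 1 / xh j - 1 / xh (j + d) = (d:ℝ) / (xh j * xh (j + d)) := by
      rw [xh_add]
      field_simp
      ring
    rw [key]
    have hle : xh j * xh j ≤ xh j * xh (j+d) :=
      mul_le_mul_of_nonneg_left (xh_mono (Nat.le_add_right j d)) h1.le
    calc (d:ℝ) / (xh j * xh (j+d)) ≤ (d:ℝ) / (xh j * xh j) := by
          gcongr
      _ = (d:ℝ) * (1 / xh j ^ 2) := by rw [pow_two]; ring
  
/-- telescoping for power 1 -/
lemma tele_one (d : ℕ) :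
    ∑' j : ℕ, (1 / xh j - 1 / xh (j + d)) = ∑ i ∈ range d, 1 / xh i := by
  have hsum := summable_tele_one d
  refine tendsto_nhds_unique hsum.hasSum.tendsto_sum_nat ?_
  have hId : ∀ N : ℕ, ∑ j ∈ range N, (1 / xh j - 1 / xh (j + d)) =
      ∑ i ∈ range d, 1 / xh i - ∑ i ∈ range d, 1 / xh (N + i) := by
    intro N
    rw [Finset.sum_sub_distrib]
    have e1 : ∑ j ∈ range N, 1 / xh (j + d) = ∑ i ∈ Finset.Ico d (d + N), 1 / xh i := by
      rw [Finset.sum_Ico_eq_sum_range]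
      simp [add_comm, Nat.add_sub_cancel_left]
    have e2 : ∑ i ∈ Finset.Ico d (d + N), 1 / xh i =
        ∑ i ∈ range (d + N), 1 / xh i - ∑ i ∈ range d, 1 / xh i := by
      rw [Finset.range_eq_Ico, ← Finset.sum_Ico_consecutive _
        (Nat.zero_le d) (Nat.le_add_right d N), Finset.range_eq_Ico]
      ring
    have e3 : ∑ i ∈ range (d + N), 1 / xh i =
        ∑ i ∈ range N, 1 / xh i + ∑ i ∈ Finset.Ico N (N + d), 1 / xh i := by
      rw [Finset.range_eq_Ico, Nat.add_comm d N, ← Finset.sum_Ico_consecutive _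
        (Nat.zero_le N) (Nat.le_add_right N d), Finset.range_eq_Ico]
    have e4 : ∑ i ∈ Finset.Ico N (N + d), 1 / xh i = ∑ i ∈ range d, 1 / xh (N + i) := by
      rw [Finset.sum_Ico_eq_sum_range]
      simp
    rw [e1, e2, e3, e4]
    ring
  rw [show (fun N : ℕ => ∑ j ∈ range N, (1 / xh j - 1 / xh (j + d))) = fun N =>
      ∑ i ∈ range d, 1 / xh i - ∑ i ∈ range d, 1 / xh (N + i) from funext hId]
  have hzero : ∀ i : ℕ, Tendsto (fun N : ℕ => 1 / xh (N + i)) atTop (nhds 0) := by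
    intro i
    have h1 : Tendsto (fun N : ℕ => xh (N + i)) atTop atTop := by
      unfold xh
      apply tendsto_atTop_add_const_right
      exact tendsto_natCast_atTop_atTop.comp (tendsto_add_atTop_nat i)
    simpa [one_div, Pi.inv_def] using h1.inv_tendsto_atTop
  have h2 : Tendsto (fun N : ℕ => ∑ i ∈ range d, 1 / xh (N + i)) atTop
      (nhds (∑ i ∈ range d, (0:ℝ))) :=
    tendsto_finset_sum _ (fun i _ => hzero i)
  simp only [Finset.sum_const_zero] at h2
  simpa using tendsto_const_nhds.sub h2

/-- regrouping a double sum over `{(j,k) : j ≤ k}` -/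
lemma regroup (F : ℕ → ℕ → ℝ) (h : Summable fun p : ℕ × ℕ => F p.1 (p.1 + p.2)) :
    ∑' k : ℕ, ∑ j ∈ range (k+1), F j k = ∑' p : ℕ × ℕ, F p.1 (p.1 + p.2) := by
  set G : ℕ × ℕ → ℝ := fun q => if q.2 ≤ q.1 then F q.2 q.1 else 0 with hG
  have hi : Function.Injective (fun p : ℕ × ℕ => ((p.1 + p.2, p.1) : ℕ × ℕ)) := by
    intro a b hab
    simp only [Prod.mk.injEq] at hab
    obtain ⟨h1, h2⟩ := hab
    exact Prod.ext h2 (by omega)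
  have hGi : ∀ p : ℕ × ℕ, G (p.1 + p.2, p.1) = F p.1 (p.1 + p.2) := by
    intro p
    simp only [hG, if_pos (Nat.le_add_right p.1 p.2)]
  have hsupp : Function.support G ⊆ Set.range (fun p : ℕ × ℕ => ((p.1 + p.2, p.1) : ℕ × ℕ)) := by
    intro q hq
    by_cases hle : q.2 ≤ q.1
    · refine ⟨(q.2, q.1 - q.2), ?_⟩
      rw [Prod.ext_iff]
      refine ⟨?_, rfl⟩
      simp only []
      omega
    · exfalso; apply hq; simp only [hG, if_neg hle]
  have hout : ∀ x ∉ Set.range (fun p : ℕ × ℕ => ((p.1 + p.2, p.1) : ℕ × ℕ)), G x = 0 := by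
    intro x hx
    by_contra hne
    exact hx (hsupp hne)
  have hGsum : Summable G := by
    rw [← hi.summable_iff hout]
    have : (G ∘ fun p : ℕ × ℕ => ((p.1 + p.2, p.1) : ℕ × ℕ)) =
        fun p : ℕ × ℕ => F p.1 (p.1 + p.2) := funext fun p => hGi p
    rw [this]; exact h
  have key : ∑' p : ℕ × ℕ, F p.1 (p.1 + p.2) = ∑' q : ℕ × ℕ, G q := by
    rw [← hi.tsum_eq hsupp]
    exact tsum_congr fun p => (hGi p).symm
  rw [key, Summable.tsum_prod hGsum]
  apply tsum_congr
  intro k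
  rw [tsum_eq_sum (s := range (k+1)) (fun j hj => by
    simp only [hG]; rw [if_neg]; simp at hj; omega)]
  apply Finset.sum_congr rfl
  intro j hj
  simp only [hG]
  rw [if_pos]
  simp at hj; omega



lemma inv_pow_le_inv_pow {a b : ℝ} (ha : 0 < a) (h : a ≤ b) (s : ℕ) :
    1 / b ^ s ≤ 1 / a ^ s :=
  one_div_le_one_div_of_le (pow_pos ha s) (pow_le_pow_left₀ ha.le h s)

lemma xh_nonneg (m : ℕ) : 0 ≤ xh m := (xh_pos m).le

lemma summable_prod_xh {a b : ℕ} (ha : 2 ≤ a) (hb : 2 ≤ b) :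
    Summable fun p : ℕ × ℕ => 1 / xh p.1 ^ a * (1 / xh p.2 ^ b) :=
  (summable_xh ha).mul_of_nonneg (summable_xh hb)
    (fun n => by have := xh_pos n; positivity) (fun n => by have := xh_pos n; positivity)

lemma t2t3_eq : ∑' p : ℕ × ℕ, 1 / xh p.1 ^ 2 * (1 / xh p.2 ^ 3) = tval 2 * tval 3 := by
  rw [Summable.tsum_prod (summable_prod_xh le_rfl (by norm_num))]
  calc ∑' (a : ℕ) (b : ℕ), 1 / xh a ^ 2 * (1 / xh b ^ 3)
      = ∑' a : ℕ, 1 / xh a ^ 2 * tval 3 :=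
        tsum_congr fun a => by rw [tsum_mul_left, ← tval_eq]
    _ = tval 2 * tval 3 := by rw [tsum_mul_right, ← tval_eq]

/-- the four double sums -/
noncomputable def UPs : ℝ := ∑' p : ℕ × ℕ, 1 / xh p.1 ^ 2 * (1 / xh (p.1 + p.2) ^ 3)
noncomputable def Us : ℝ := ∑' p : ℕ × ℕ, 1 / xh p.1 ^ 2 * (1 / xh (p.1 + p.2 + 1) ^ 3)
noncomputable def Ls : ℝ := ∑' p : ℕ × ℕ, 1 / xh p.1 ^ 3 * (1 / xh (p.1 + p.2 + 1) ^ 2)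
noncomputable def Dd : ℝ :=
  ∑' p : ℕ × ℕ, ((p.2 : ℝ) + 1) * (1 / xh p.1 ^ 3 * (1 / xh (p.1 + p.2 + 1) ^ 3))

lemma summable_UPs : Summable fun p : ℕ × ℕ => 1 / xh p.1 ^ 2 * (1 / xh (p.1 + p.2) ^ 3) := by
  refine Summable.of_nonneg_of_le (fun p => by have := xh_pos p.1; have := xh_pos (p.1+p.2); positivity)
    (fun p => ?_) (summable_prod_xh (a:=2) (b:=3) le_rfl (by norm_num))
  have h := inv_pow_le_inv_pow (xh_pos p.2) (xh_mono (Nat.le_add_left p.2 p.1)) 3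
  have h2 : (0:ℝ) ≤ 1 / xh p.1 ^ 2 := by have := xh_pos p.1; positivity
  exact mul_le_mul_of_nonneg_left h h2

lemma summable_Us : Summable fun p : ℕ × ℕ => 1 / xh p.1 ^ 2 * (1 / xh (p.1 + p.2 + 1) ^ 3) := by
  refine Summable.of_nonneg_of_le (fun p => by have := xh_pos p.1; have := xh_pos (p.1+p.2+1); positivity)
    (fun p => ?_) (summable_prod_xh (a:=2) (b:=3) le_rfl (by norm_num))
  have h := inv_pow_le_inv_pow (xh_pos p.2) (xh_mono (by omega : p.2 ≤ p.1 + p.2 + 1)) 3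
  have h2 : (0:ℝ) ≤ 1 / xh p.1 ^ 2 := by have := xh_pos p.1; positivity
  exact mul_le_mul_of_nonneg_left h h2

lemma summable_Ls : Summable fun p : ℕ × ℕ => 1 / xh p.1 ^ 3 * (1 / xh (p.1 + p.2 + 1) ^ 2) := by
  refine Summable.of_nonneg_of_le (fun p => by have := xh_pos p.1; have := xh_pos (p.1+p.2+1); positivity)
    (fun p => ?_) (summable_prod_xh (a:=3) (b:=2) (by norm_num) le_rfl)
  have h := inv_pow_le_inv_pow (xh_pos p.2) (xh_mono (by omega : p.2 ≤ p.1 + p.2 + 1)) 2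
  have h2 : (0:ℝ) ≤ 1 / xh p.1 ^ 3 := by have := xh_pos p.1; positivity
  exact mul_le_mul_of_nonneg_left h h2

lemma xh_ge_succ (j e : ℕ) : ((e:ℝ) + 1) ≤ xh (j + e + 1) := by
  unfold xh
  push_cast
  have : (0:ℝ) ≤ (j:ℝ) := Nat.cast_nonneg j
  linarith

lemma summable_Dd :
    Summable fun p : ℕ × ℕ => ((p.2 : ℝ) + 1) * (1 / xh p.1 ^ 3 * (1 / xh (p.1 + p.2 + 1) ^ 3)) := by
  have hS : Summable fun p : ℕ × ℕ => 1 / xh p.1 ^ 3 * (1 / ((p.2:ℝ) + 1) ^ 2) :=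
    Summable.mul_of_nonneg (f := fun n : ℕ => 1 / xh n ^ 3) (g := fun n : ℕ => 1 / ((n:ℝ) + 1) ^ 2)
      (summable_xh (by norm_num : (2:ℕ) ≤ 3)) (summable_shift_pow le_rfl)
      (fun n => by have := xh_pos n; positivity)
      (fun n => by have : (0:ℝ) ≤ (n:ℝ) := Nat.cast_nonneg n; positivity)
  refine Summable.of_nonneg_of_le (fun p => ?_) (fun p => ?_) hS
  · have := xh_pos p.1; have := xh_pos (p.1+p.2+1)
    have : (0:ℝ) ≤ (p.2:ℝ) := Nat.cast_nonneg p.2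
    positivity
  · obtain ⟨j, e⟩ := p
    simp only
    have he1 : (0:ℝ) < (e:ℝ) + 1 := by have : (0:ℝ) ≤ (e:ℝ) := Nat.cast_nonneg e; linarith
    have h := inv_pow_le_inv_pow he1 (xh_ge_succ j e) 3
    have hj := xh_pos j
    calc ((e:ℝ) + 1) * (1 / xh j ^ 3 * (1 / xh (j + e + 1) ^ 3))
        ≤ ((e:ℝ) + 1) * (1 / xh j ^ 3 * (1 / ((e:ℝ)+1) ^ 3)) := by
          have hnn : (0:ℝ) ≤ 1 / xh j ^ 3 := by positivity
          exact mul_le_mul_of_nonneg_left (mul_le_mul_of_nonneg_left h hnn) he1.le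
      _ = 1 / xh j ^ 3 * (1 / ((e:ℝ) + 1) ^ 2) := by
          field_simp

lemma summable_fiber (f : ℕ × ℕ → ℝ) (hf : Summable f) :
    Summable fun a => ∑' b, f (a, b) :=
  ⟨∑' p, f p, hf.hasSum.prod_fiberwise fun b => (hf.prod_factor b).hasSum⟩

lemma summable_inner_Us (j : ℕ) :
    Summable fun e : ℕ => 1 / xh j ^ 2 * (1 / xh (j + e + 1) ^ 3) :=
  summable_Us.prod_factor j

lemma pow_five (a : ℝ) : 1 / a ^ 2 * (1 / a ^ 3) = 1 / a ^ 5 := by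
  rw [one_div_mul_one_div, ← pow_add]

/-- L2 : `UPs = t(5) + Us` -/
lemma L2 : UPs = tval 5 + Us := by
  rw [UPs, Summable.tsum_prod summable_UPs]
  have inner : ∀ j : ℕ, ∑' e : ℕ, 1 / xh j ^ 2 * (1 / xh (j + e) ^ 3) =
      1 / xh j ^ 5 + ∑' e : ℕ, 1 / xh j ^ 2 * (1 / xh (j + e + 1) ^ 3) := by
    intro j
    have hsum : Summable fun e : ℕ => 1 / xh j ^ 2 * (1 / xh (j + e) ^ 3) :=
      summable_UPs.prod_factor j
    rw [Summable.tsum_eq_zero_add hsum]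
    rw [Nat.add_zero, pow_five]
    rfl
  calc ∑' (j : ℕ) (e : ℕ), 1 / xh j ^ 2 * (1 / xh (j + e) ^ 3)
      = ∑' j : ℕ, (1 / xh j ^ 5 + ∑' e : ℕ, 1 / xh j ^ 2 * (1 / xh (j + e + 1) ^ 3)) :=
        tsum_congr inner
    _ = tval 5 + Us := by
        rw [Summable.tsum_add (summable_xh (by norm_num : (2:ℕ) ≤ 5))
          (summable_fiber _ summable_Us), ← tval_eq, Us, Summable.tsum_prod summable_Us]

/-- L3 : `UPs + Ls = t(2)·t(3)` -/
lemma L3 : UPs + Ls = tval 2 * tval 3 := by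
  set Hf : ℕ × ℕ → ℝ := fun p => 1 / xh p.1 ^ 2 * (1 / xh p.2 ^ 3) with hHf
  have hHfsum : Summable Hf := summable_prod_xh le_rfl (by norm_num)
  have hHfnn : ∀ p, 0 ≤ Hf p := fun p => by
    have := xh_pos p.1; have := xh_pos p.2; positivity
  set Gup : ℕ × ℕ → ℝ := fun p => if p.1 ≤ p.2 then Hf p else 0 with hGup
  set Glo : ℕ × ℕ → ℝ := fun p => if p.2 < p.1 then Hf p else 0 with hGlo
  have hsplit : ∀ p, Hf p = Gup p + Glo p := by
    intro p
    simp only [hGup, hGlo]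
    by_cases h : p.1 ≤ p.2
    · rw [if_pos h, if_neg (by omega)]; ring
    · rw [if_neg h, if_pos (by omega)]; ring
  have hGupS : Summable Gup := by
    refine Summable.of_nonneg_of_le (fun p => ?_) (fun p => ?_) hHfsum
    · simp only [hGup]; split
      · exact hHfnn p
      · exact le_rfl
    · simp only [hGup]; split
      · exact le_rfl
      · exact hHfnn p
  have hGloS : Summable Glo := by
    refine Summable.of_nonneg_of_le (fun p => ?_) (fun p => ?_) hHfsum
    · simp only [hGlo]; split
      · exact hHfnn p
      · exact le_rfl
    · simp only [hGlo]; split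
      · exact le_rfl
      · exact hHfnn p
  have htot : tval 2 * tval 3 = (∑' p, Gup p) + ∑' p, Glo p := by
    rw [← t2t3_eq, ← Summable.tsum_add hGupS hGloS]
    exact tsum_congr hsplit
  -- UP part
  have hup : ∑' p, Gup p = UPs := by
    have hi : Function.Injective (fun p : ℕ × ℕ => ((p.1, p.1 + p.2) : ℕ × ℕ)) := by
      intro a b hab
      simp only [Prod.mk.injEq] at hab
      exact Prod.ext hab.1 (by omega)
    have hsupp : Function.support Gup ⊆ Set.range (fun p : ℕ × ℕ => ((p.1, p.1 + p.2) : ℕ × ℕ)) := by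
      intro q hq
      by_cases hle : q.1 ≤ q.2
      · refine ⟨(q.1, q.2 - q.1), ?_⟩
        rw [Prod.ext_iff]
        refine ⟨rfl, ?_⟩
        simp only []
        omega
      · exfalso; apply hq; simp only [hGup, if_neg hle]
    rw [← hi.tsum_eq hsupp, UPs]
    apply tsum_congr
    intro p
    simp only [hGup, hHf]
    rw [if_pos (Nat.le_add_right p.1 p.2)]
  -- LO part
  have hlo : ∑' p, Glo p = Ls := by
    have hi : Function.Injective (fun p : ℕ × ℕ => ((p.1 + p.2 + 1, p.1) : ℕ × ℕ)) := by
      intro a b hab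
      simp only [Prod.mk.injEq] at hab
      exact Prod.ext hab.2 (by omega)
    have hsupp : Function.support Glo ⊆
        Set.range (fun p : ℕ × ℕ => ((p.1 + p.2 + 1, p.1) : ℕ × ℕ)) := by
      intro q hq
      by_cases hlt : q.2 < q.1
      · refine ⟨(q.2, q.1 - q.2 - 1), ?_⟩
        rw [Prod.ext_iff]
        refine ⟨?_, rfl⟩
        simp only []
        omega
      · exfalso; apply hq; simp only [hGlo, if_neg hlt]
    rw [← hi.tsum_eq hsupp, Ls]
    apply tsum_congr
    intro p
    simp only [hGlo, hHf]
    rw [if_pos (by omega : p.1 < p.1 + p.2 + 1)]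
    ring
  rw [htot, hup, hlo]

/-- L4 : `Ls - Us = Dd` -/
lemma L4 : Ls - Us = Dd := by
  rw [Ls, Us, Dd, ← Summable.tsum_sub summable_Ls summable_Us]
  apply tsum_congr
  intro p
  obtain ⟨j, e⟩ := p
  simp only
  have hz : xh (j + e + 1) = xh j + ((e:ℝ) + 1) := by
    rw [show j + e + 1 = j + (e + 1) from rfl, xh_add]
    push_cast
    ring
  have hy := xh_pos j
  have hzpos := xh_pos (j + e + 1)
  rw [hz] at hzpos ⊢
  field_simp
  ring

/-- the linear sums -/
noncomputable def Av : ℝ := ∑' e : ℕ, (∑ i ∈ range (e+1), 1 / xh i) * (1 / ((e:ℝ)+1)^4)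
noncomputable def Bv : ℝ := ∑' e : ℕ, (∑ i ∈ range (e+1), 1 / xh i ^ 2) * (1 / ((e:ℝ)+1)^3)
noncomputable def Cv : ℝ := ∑' e : ℕ, (∑ i ∈ range (e+1), 1 / xh i ^ 3) * (1 / ((e:ℝ)+1)^2)
noncomputable def z3 : ℝ := ∑' e : ℕ, 1 / ((e:ℝ)+1)^3

lemma cast_succ_pos (e : ℕ) : (0:ℝ) < (e:ℝ) + 1 := by
  have : (0:ℝ) ≤ (e:ℝ) := Nat.cast_nonneg e
  linarith

lemma summable_Av : Summable fun e : ℕ => (∑ i ∈ range (e+1), 1 / xh i) * (1 / ((e:ℝ)+1)^4) := by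
  refine Summable.of_nonneg_of_le (fun e => ?_) (fun e => ?_)
    ((summable_shift_pow (b := 3) (by norm_num)).mul_left 2)
  · have : ∀ i ∈ range (e+1), (0:ℝ) ≤ 1 / xh i := fun i _ => by have := xh_pos i; positivity
    have h1 := Finset.sum_nonneg this
    have := cast_succ_pos e
    positivity
  · have hb : ∑ i ∈ range (e+1), 1 / xh i ≤ 2 * ((e:ℝ)+1) := by
      calc ∑ i ∈ range (e+1), 1 / xh i ≤ ∑ _i ∈ range (e+1), (2:ℝ) :=
            Finset.sum_le_sum fun i _ => xh_le_two_inv i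
        _ = 2 * ((e:ℝ)+1) := by
            rw [Finset.sum_const, Finset.card_range]
            push_cast
            ring
    have he := cast_succ_pos e
    calc (∑ i ∈ range (e+1), 1 / xh i) * (1 / ((e:ℝ)+1)^4)
        ≤ (2 * ((e:ℝ)+1)) * (1 / ((e:ℝ)+1)^4) := by
          apply mul_le_mul_of_nonneg_right hb (by positivity)
      _ = 2 * (1 / ((e:ℝ)+1)^3) := by
          field_simp

lemma summable_partial_pow {s : ℕ} (hs : 2 ≤ s) {r : ℕ} (hr : 2 ≤ r) :
    Summable fun e : ℕ => (∑ i ∈ range (e+1), 1 / xh i ^ s) * (1 / ((e:ℝ)+1)^r) := by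
  refine Summable.of_nonneg_of_le (fun e => ?_) (fun e => ?_)
    ((summable_shift_pow hr).mul_left (tval s))
  · have : ∀ i ∈ range (e+1), (0:ℝ) ≤ 1 / xh i ^ s := fun i _ => by have := xh_pos i; positivity
    have h1 := Finset.sum_nonneg this
    have := cast_succ_pos e
    positivity
  · have hb : ∑ i ∈ range (e+1), 1 / xh i ^ s ≤ tval s := by
      rw [tval_eq]
      exact Summable.sum_le_tsum _ (fun i _ => by have := xh_pos i; positivity) (summable_xh hs)
    have he := cast_succ_pos e
    exact mul_le_mul_of_nonneg_right hb (by positivity)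

lemma summable_Bv : Summable fun e : ℕ => (∑ i ∈ range (e+1), 1 / xh i ^ 2) * (1 / ((e:ℝ)+1)^3) :=
  summable_partial_pow le_rfl (by norm_num)

lemma summable_Cv : Summable fun e : ℕ => (∑ i ∈ range (e+1), 1 / xh i ^ 3) * (1 / ((e:ℝ)+1)^2) :=
  summable_partial_pow (by norm_num) le_rfl

lemma summable_z3 : Summable fun e : ℕ => 1 / ((e:ℝ)+1)^3 := summable_shift_pow (by norm_num)

/-- L5 : `Dd = Cv + 3 Bv + 6 Av - 6 t(2) z3` -/
lemma L5 : Dd = Cv + 3 * Bv + 6 * Av - 6 * (tval 2 * z3) := by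
  set fD : ℕ × ℕ → ℝ :=
    fun q => ((q.1 : ℝ) + 1) * (1 / xh q.2 ^ 3 * (1 / xh (q.2 + q.1 + 1) ^ 3)) with hfD
  have hDswap : Dd = ∑' q : ℕ × ℕ, fD q := by
    rw [Dd, ← (Equiv.prodComm ℕ ℕ).tsum_eq fD]
    exact tsum_congr fun p => rfl
  have hfDsum : Summable fD := by
    rw [← (Equiv.prodComm ℕ ℕ).summable_iff (f := fD)]
    exact summable_Dd.congr fun p => rfl
  have inner : ∀ e : ℕ, ∑' j : ℕ, fD (e, j) =
      (((∑ i ∈ range (e+1), 1 / xh i ^ 3) * (1 / ((e:ℝ)+1)^2)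
        + 3 * ((∑ i ∈ range (e+1), 1 / xh i ^ 2) * (1 / ((e:ℝ)+1)^3)))
        + 6 * ((∑ i ∈ range (e+1), 1 / xh i) * (1 / ((e:ℝ)+1)^4)))
      - 6 * (tval 2 * (1 / ((e:ℝ)+1)^3)) := by
    intro e
    have hdcast : (((e+1:ℕ)):ℝ) = (e:ℝ) + 1 := by push_cast; ring
    have hdpos : (0:ℝ) < ((e+1:ℕ):ℝ) := by rw [hdcast]; exact cast_succ_pos e
    have hPF : ∀ j : ℕ, fD (e, j) =
        ((1/((e+1:ℕ):ℝ)^2) * (1 / xh j ^ 3 - 1 / xh (j+(e+1)) ^ 3)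
          - (3/((e+1:ℕ):ℝ)^3) * (1 / xh j ^ 2 + 1 / xh (j+(e+1)) ^ 2))
        + (6/((e+1:ℕ):ℝ)^4) * (1 / xh j - 1 / xh (j+(e+1))) := by
      intro j
      have hy := xh_pos j
      have hyd := xh_pos (j+(e+1))
      have hxadd : xh (j + (e+1)) = xh j + ((e+1:ℕ):ℝ) := xh_add j (e+1)
      simp only [hfD]
      rw [show j + e + 1 = j + (e+1) from rfl] at *
      rw [hxadd] at hyd ⊢
      rw [hdcast] at hyd ⊢
      field_simp
      ring
    have S1 : Summable fun j : ℕ => 1 / xh j ^ 3 - 1 / xh (j+(e+1)) ^ 3 :=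
      (summable_xh (by norm_num : (2:ℕ) ≤ 3)).sub (summable_xh_shift (by norm_num) (e+1))
    have S2 : Summable fun j : ℕ => 1 / xh j ^ 2 + 1 / xh (j+(e+1)) ^ 2 :=
      (summable_xh le_rfl).add (summable_xh_shift le_rfl (e+1))
    have S3 : Summable fun j : ℕ => 1 / xh j - 1 / xh (j+(e+1)) := summable_tele_one (e+1)
    have g2 : ∑' j : ℕ, (1 / xh j ^ 2 + 1 / xh (j+(e+1)) ^ 2) =
        2 * tval 2 - ∑ i ∈ range (e+1), 1 / xh i ^ 2 := by
      rw [Summable.tsum_add (summable_xh le_rfl) (summable_xh_shift le_rfl (e+1)),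
        tsum_shift le_rfl (e+1), ← tval_eq]
      ring
    calc ∑' j : ℕ, fD (e, j)
        = ∑' j : ℕ, (((1/((e+1:ℕ):ℝ)^2) * (1 / xh j ^ 3 - 1 / xh (j+(e+1)) ^ 3)
            - (3/((e+1:ℕ):ℝ)^3) * (1 / xh j ^ 2 + 1 / xh (j+(e+1)) ^ 2))
            + (6/((e+1:ℕ):ℝ)^4) * (1 / xh j - 1 / xh (j+(e+1)))) := tsum_congr hPF
      _ = ((1/((e+1:ℕ):ℝ)^2) * ∑' j : ℕ, (1 / xh j ^ 3 - 1 / xh (j+(e+1)) ^ 3))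
            - (3/((e+1:ℕ):ℝ)^3) * (∑' j : ℕ, (1 / xh j ^ 2 + 1 / xh (j+(e+1)) ^ 2))
            + (6/((e+1:ℕ):ℝ)^4) * ∑' j : ℕ, (1 / xh j - 1 / xh (j+(e+1))) := by
          rw [Summable.tsum_add ((S1.mul_left _).sub (S2.mul_left _)) (S3.mul_left _),
            Summable.tsum_sub (S1.mul_left _) (S2.mul_left _), tsum_mul_left, tsum_mul_left,
            tsum_mul_left]
      _ = ((1/((e+1:ℕ):ℝ)^2) * ∑ i ∈ range (e+1), 1 / xh i ^ 3)
            - (3/((e+1:ℕ):ℝ)^3) * (2 * tval 2 - ∑ i ∈ range (e+1), 1 / xh i ^ 2)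
            + (6/((e+1:ℕ):ℝ)^4) * ∑ i ∈ range (e+1), 1 / xh i := by
          rw [tele_pow (by norm_num : (2:ℕ) ≤ 3) (e+1), g2, tele_one (e+1)]
      _ = _ := by
          rw [hdcast]
          have he := cast_succ_pos e
          field_simp
          ring
  calc Dd = ∑' (e : ℕ) (j : ℕ), fD (e, j) := by rw [hDswap, Summable.tsum_prod hfDsum]
    _ = ∑' e : ℕ,
        ((((∑ i ∈ range (e+1), 1 / xh i ^ 3) * (1 / ((e:ℝ)+1)^2)
        + 3 * ((∑ i ∈ range (e+1), 1 / xh i ^ 2) * (1 / ((e:ℝ)+1)^3)))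
        + 6 * ((∑ i ∈ range (e+1), 1 / xh i) * (1 / ((e:ℝ)+1)^4)))
        - 6 * (tval 2 * (1 / ((e:ℝ)+1)^3))) := tsum_congr inner
    _ = Cv + 3 * Bv + 6 * Av - 6 * (tval 2 * z3) := by
        rw [Summable.tsum_sub (((summable_Cv).add (summable_Bv.mul_left 3)).add (summable_Av.mul_left 6))
          ((summable_z3.mul_left (tval 2)).mul_left 6),
          Summable.tsum_add ((summable_Cv).add (summable_Bv.mul_left 3)) (summable_Av.mul_left 6),
          Summable.tsum_add summable_Cv (summable_Bv.mul_left 3),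
          tsum_mul_left, tsum_mul_left, tsum_mul_left, tsum_mul_left]
        simp only [Av, Bv, Cv, z3]

lemma cast_add_one (j e : ℕ) : (((j+e:ℕ)):ℝ) + 1 = xh j + xh e := by
  unfold xh; push_cast; ring

lemma xh_sum_pos (j e : ℕ) : 0 < xh j + xh e := by
  have := xh_pos j; have := xh_pos e; linarith

/-- generalized product formula -/
lemma tmul_eq {a b : ℕ} (ha : 2 ≤ a) (hb : 2 ≤ b) :
    ∑' p : ℕ × ℕ, 1 / xh p.1 ^ a * (1 / xh p.2 ^ b) = tval a * tval b := by
  rw [Summable.tsum_prod (summable_prod_xh ha hb)]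
  calc ∑' (x : ℕ) (y : ℕ), 1 / xh x ^ a * (1 / xh y ^ b)
      = ∑' x : ℕ, 1 / xh x ^ a * tval b :=
        tsum_congr fun x => by rw [tsum_mul_left, ← tval_eq]
    _ = tval a * tval b := by rw [tsum_mul_right, ← tval_eq]

/-- bounds for kernel pieces -/
lemma kernel_bound1 (j e : ℕ) :
    1 / xh j * (1 / (xh j + xh e) ^ 4) ≤ 1 / xh j ^ 2 * (1 / xh e ^ 3) := by
  have hj := xh_pos j
  have he := xh_pos e
  have hS := xh_sum_pos j e
  have key : xh j ^ 2 * xh e ^ 3 ≤ xh j * (xh j + xh e) ^ 4 := by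
    have h1 : xh j * xh e ^ 3 ≤ (xh j + xh e) * (xh j + xh e) ^ 3 := by
      apply mul_le_mul (by linarith) (pow_le_pow_left₀ he.le (by linarith) 3) (by positivity)
        (by positivity)
    calc xh j ^ 2 * xh e ^ 3 = xh j * (xh j * xh e ^ 3) := by ring
      _ ≤ xh j * ((xh j + xh e) * (xh j + xh e) ^ 3) := by
          exact mul_le_mul_of_nonneg_left h1 hj.le
      _ = xh j * (xh j + xh e) ^ 4 := by ring
  calc 1 / xh j * (1 / (xh j + xh e) ^ 4) = 1 / (xh j * (xh j + xh e) ^ 4) := by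
        rw [one_div_mul_one_div]
    _ ≤ 1 / (xh j ^ 2 * xh e ^ 3) := one_div_le_one_div_of_le (by positivity) key
    _ = 1 / xh j ^ 2 * (1 / xh e ^ 3) := by rw [one_div_mul_one_div]

lemma kernel_bound2 (j e : ℕ) :
    1 / xh j ^ 2 * (1 / (xh j + xh e) ^ 3) ≤ 1 / xh j ^ 2 * (1 / xh e ^ 3) := by
  have hj := xh_pos j
  have he := xh_pos e
  exact mul_le_mul_of_nonneg_left
    (inv_pow_le_inv_pow he (by linarith) 3) (by positivity)

lemma kernel_bound3 (j e : ℕ) :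
    1 / xh j ^ 3 * (1 / (xh j + xh e) ^ 2) ≤ 1 / xh j ^ 3 * (1 / xh e ^ 2) := by
  have hj := xh_pos j
  have he := xh_pos e
  exact mul_le_mul_of_nonneg_left
    (inv_pow_le_inv_pow he (by linarith) 2) (by positivity)

lemma summable_K1 : Summable fun p : ℕ × ℕ => 1 / xh p.1 * (1 / (xh p.1 + xh p.2) ^ 4) := by
  refine Summable.of_nonneg_of_le (fun p => ?_) (fun p => kernel_bound1 p.1 p.2)
    (summable_prod_xh (a:=2) (b:=3) le_rfl (by norm_num))
  have := xh_pos p.1; have := xh_sum_pos p.1 p.2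
  positivity

lemma summable_K2 : Summable fun p : ℕ × ℕ => 1 / xh p.1 ^ 2 * (1 / (xh p.1 + xh p.2) ^ 3) := by
  refine Summable.of_nonneg_of_le (fun p => ?_) (fun p => kernel_bound2 p.1 p.2)
    (summable_prod_xh (a:=2) (b:=3) le_rfl (by norm_num))
  have := xh_pos p.1; have := xh_sum_pos p.1 p.2
  positivity

lemma summable_K3 : Summable fun p : ℕ × ℕ => 1 / xh p.1 ^ 3 * (1 / (xh p.1 + xh p.2) ^ 2) := by
  refine Summable.of_nonneg_of_le (fun p => ?_) (fun p => kernel_bound3 p.1 p.2)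
    (summable_prod_xh (a:=3) (b:=2) (by norm_num) le_rfl)
  have := xh_pos p.1; have := xh_sum_pos p.1 p.2
  positivity

/-- regrouped forms of Av, Bv, Cv -/
lemma Av_eq : Av = ∑' p : ℕ × ℕ, 1 / xh p.1 * (1 / (xh p.1 + xh p.2) ^ 4) := by
  have hsum : Summable fun p : ℕ × ℕ => 1 / xh p.1 * (1 / (((p.1 + p.2 : ℕ):ℝ) + 1) ^ 4) :=
    summable_K1.congr fun p => by rw [cast_add_one]
  calc Av = ∑' k : ℕ, ∑ j ∈ range (k+1), 1 / xh j * (1 / ((k:ℝ)+1)^4) :=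
        tsum_congr fun k => Finset.sum_mul _ _ _
    _ = ∑' p : ℕ × ℕ, 1 / xh p.1 * (1 / (((p.1 + p.2 : ℕ):ℝ) + 1) ^ 4) :=
        regroup (fun j k => 1 / xh j * (1 / ((k:ℝ)+1)^4)) hsum
    _ = ∑' p : ℕ × ℕ, 1 / xh p.1 * (1 / (xh p.1 + xh p.2) ^ 4) :=
        tsum_congr fun p => by rw [cast_add_one]

lemma Bv_eq : Bv = ∑' p : ℕ × ℕ, 1 / xh p.1 ^ 2 * (1 / (xh p.1 + xh p.2) ^ 3) := by
  have hsum : Summable fun p : ℕ × ℕ => 1 / xh p.1 ^ 2 * (1 / (((p.1 + p.2 : ℕ):ℝ) + 1) ^ 3) :=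
    summable_K2.congr fun p => by rw [cast_add_one]
  calc Bv = ∑' k : ℕ, ∑ j ∈ range (k+1), 1 / xh j ^ 2 * (1 / ((k:ℝ)+1)^3) :=
        tsum_congr fun k => Finset.sum_mul _ _ _
    _ = ∑' p : ℕ × ℕ, 1 / xh p.1 ^ 2 * (1 / (((p.1 + p.2 : ℕ):ℝ) + 1) ^ 3) :=
        regroup (fun j k => 1 / xh j ^ 2 * (1 / ((k:ℝ)+1)^3)) hsum
    _ = ∑' p : ℕ × ℕ, 1 / xh p.1 ^ 2 * (1 / (xh p.1 + xh p.2) ^ 3) :=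
        tsum_congr fun p => by rw [cast_add_one]

lemma Cv_eq : Cv = ∑' p : ℕ × ℕ, 1 / xh p.1 ^ 3 * (1 / (xh p.1 + xh p.2) ^ 2) := by
  have hsum : Summable fun p : ℕ × ℕ => 1 / xh p.1 ^ 3 * (1 / (((p.1 + p.2 : ℕ):ℝ) + 1) ^ 2) :=
    summable_K3.congr fun p => by rw [cast_add_one]
  calc Cv = ∑' k : ℕ, ∑ j ∈ range (k+1), 1 / xh j ^ 3 * (1 / ((k:ℝ)+1)^2) :=
        tsum_congr fun k => Finset.sum_mul _ _ _
    _ = ∑' p : ℕ × ℕ, 1 / xh p.1 ^ 3 * (1 / (((p.1 + p.2 : ℕ):ℝ) + 1) ^ 2) :=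
        regroup (fun j k => 1 / xh j ^ 3 * (1 / ((k:ℝ)+1)^2)) hsum
    _ = ∑' p : ℕ × ℕ, 1 / xh p.1 ^ 3 * (1 / (xh p.1 + xh p.2) ^ 2) :=
        tsum_congr fun p => by rw [cast_add_one]

/-- the symmetric-kernel pointwise identity -/
lemma kernel_identity (j e : ℕ) :
    (6 * (1 / xh j * (1 / (xh j + xh e) ^ 4))
      + 3 * (1 / xh j ^ 2 * (1 / (xh j + xh e) ^ 3))
      + 1 / xh j ^ 3 * (1 / (xh j + xh e) ^ 2))
    + (6 * (1 / xh e * (1 / (xh e + xh j) ^ 4))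
      + 3 * (1 / xh e ^ 2 * (1 / (xh e + xh j) ^ 3))
      + 1 / xh e ^ 3 * (1 / (xh e + xh j) ^ 2))
    = 1 / xh j ^ 2 * (1 / xh e ^ 3) + 1 / xh j ^ 3 * (1 / xh e ^ 2) := by
  have hj := xh_pos j
  have he := xh_pos e
  have hS := xh_sum_pos j e
  rw [show xh e + xh j = xh j + xh e from by ring]
  field_simp
  ring

/-- L6 : `6 Av + 3 Bv + Cv = t(2)·t(3)` -/
lemma L6 : 6 * Av + 3 * Bv + Cv = tval 2 * tval 3 := by
  set Kf : ℕ × ℕ → ℝ := fun p =>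
    6 * (1 / xh p.1 * (1 / (xh p.1 + xh p.2) ^ 4))
      + 3 * (1 / xh p.1 ^ 2 * (1 / (xh p.1 + xh p.2) ^ 3))
      + 1 / xh p.1 ^ 3 * (1 / (xh p.1 + xh p.2) ^ 2) with hKf
  have hKsum : Summable Kf :=
    ((summable_K1.mul_left 6).add (summable_K2.mul_left 3)).add summable_K3
  have hPhi : 6 * Av + 3 * Bv + Cv = ∑' p, Kf p := by
    rw [Av_eq, Bv_eq, Cv_eq, ← tsum_mul_left (a := (6:ℝ)), ← tsum_mul_left (a := (3:ℝ)),
      ← Summable.tsum_add (summable_K1.mul_left 6) (summable_K2.mul_left 3),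
      ← Summable.tsum_add ((summable_K1.mul_left 6).add (summable_K2.mul_left 3)) summable_K3]
  have hswap : ∑' p : ℕ × ℕ, Kf (p.2, p.1) = ∑' p, Kf p :=
    (Equiv.prodComm ℕ ℕ).tsum_eq Kf
  have hswapsum : Summable fun p : ℕ × ℕ => Kf (p.2, p.1) := by
    rw [← (Equiv.prodComm ℕ ℕ).summable_iff (f := Kf)] at hKsum
    exact hKsum.congr fun p => rfl
  have hdouble : (∑' p, Kf p) + ∑' p, Kf p =
      tval 2 * tval 3 + tval 3 * tval 2 := by
    calc (∑' p, Kf p) + ∑' p, Kf p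
        = (∑' p, Kf p) + ∑' p : ℕ × ℕ, Kf (p.2, p.1) := by rw [hswap]
      _ = ∑' p : ℕ × ℕ, (Kf p + Kf (p.2, p.1)) := (Summable.tsum_add hKsum hswapsum).symm
      _ = ∑' p : ℕ × ℕ, (1 / xh p.1 ^ 2 * (1 / xh p.2 ^ 3)
            + 1 / xh p.1 ^ 3 * (1 / xh p.2 ^ 2)) :=
          tsum_congr fun p => kernel_identity p.1 p.2
      _ = tval 2 * tval 3 + tval 3 * tval 2 := by
          rw [Summable.tsum_add (summable_prod_xh (a:=2) (b:=3) le_rfl (by norm_num))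
            (summable_prod_xh (a:=3) (b:=2) (by norm_num) le_rfl),
            tmul_eq le_rfl (by norm_num), tmul_eq (by norm_num) le_rfl]
  rw [hPhi]
  linarith [hdouble]

/-- L7 : parity, `t(3) = 7 ζ(3)` -/
lemma L7 : tval 3 = 7 * z3 := by
  have hz : Summable fun n : ℕ => 1 / (n:ℝ) ^ 3 := by
    rw [Real.summable_one_div_nat_pow]
    norm_num
  set Z : ℝ := ∑' n : ℕ, 1 / (n:ℝ) ^ 3 with hZ
  have heven : (fun k : ℕ => 1 / ((2*k : ℕ):ℝ) ^ 3) = fun k : ℕ => (1/8) * (1 / (k:ℝ) ^ 3) := by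
    funext k
    push_cast
    rw [one_div_mul_one_div, mul_pow]
    norm_num
  have hodd : (fun k : ℕ => 1 / ((2*k+1 : ℕ):ℝ) ^ 3) = fun k : ℕ => (1/8) * (1 / xh k ^ 3) := by
    funext k
    unfold xh
    push_cast
    have h1 : (0:ℝ) < (k:ℝ) + 1/2 := by
      have : (0:ℝ) ≤ (k:ℝ) := Nat.cast_nonneg k
      linarith
    rw [show (2*(k:ℝ)+1) = 2*((k:ℝ)+1/2) from by ring, one_div_mul_one_div, mul_pow]
    norm_num
  have hevenS : Summable fun k : ℕ => 1 / ((2*k : ℕ):ℝ) ^ 3 := by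
    rw [heven]; exact hz.mul_left _
  have hoddS : Summable fun k : ℕ => 1 / ((2*k+1 : ℕ):ℝ) ^ 3 := by
    rw [hodd]; exact (summable_xh (by norm_num : (2:ℕ) ≤ 3)).mul_left _
  have hsplit := tsum_even_add_odd (f := fun n : ℕ => 1/(n:ℝ)^3) hevenS hoddS
  rw [heven] at hsplit
  rw [hodd] at hsplit
  rw [tsum_mul_left, tsum_mul_left, ← tval_eq, ← hZ] at hsplit
  have hZz3 : Z = z3 := by
    rw [hZ, Summable.tsum_eq_zero_add hz, z3]
    norm_num
  rw [hZz3] at hsplit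
  linarith

end T5aux

theorem stmt5 :
    (∑' m : ℕ, (∑ k ∈ Finset.Icc 1 (m + 1), (1 : ℝ) / ((k : ℝ) - 1/2) ^ 2)
        / ((m : ℝ) + 1/2) ^ 3)
      = (1/2) * tval 5 + (3/7) * tval 2 * tval 3 := by
  open T5aux in
  have hL1 : (∑' m : ℕ, (∑ k ∈ Finset.Icc 1 (m + 1), (1 : ℝ) / ((k : ℝ) - 1/2) ^ 2)
      / ((m : ℝ) + 1/2) ^ 3) = UPs := by
    calc (∑' m : ℕ, (∑ k ∈ Finset.Icc 1 (m + 1), (1 : ℝ) / ((k : ℝ) - 1/2) ^ 2)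
        / ((m : ℝ) + 1/2) ^ 3)
        = ∑' k : ℕ, ∑ j ∈ Finset.range (k+1), 1 / xh j ^ 2 * (1 / xh k ^ 3) := by
          apply tsum_congr
          intro m
          have hIcc : ∑ k ∈ Finset.Icc 1 (m + 1), (1 : ℝ) / ((k : ℝ) - 1/2) ^ 2
              = ∑ j ∈ Finset.range (m+1), 1 / xh j ^ 2 := by
            rw [← Finset.Ico_add_one_right_eq_Icc, Finset.sum_Ico_eq_sum_range]
            rw [show m + 1 + 1 - 1 = m + 1 from by omega]
            apply Finset.sum_congr rfl
            intro i _
            unfold xh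
            congr 1
            push_cast
            ring
          rw [hIcc, Finset.sum_div]
          apply Finset.sum_congr rfl
          intro j _
          rw [show ((m:ℝ) + 1/2) = xh m from rfl, div_eq_mul_one_div]
    _ = UPs :=
        regroup (fun j k => 1 / xh j ^ 2 * (1 / xh k ^ 3)) summable_UPs
  rw [hL1]
  have h2 := T5aux.L2
  have h3 := T5aux.L3
  have h4 := T5aux.L4
  have h5 := T5aux.L5
  have h6 := T5aux.L6
  have h7 := T5aux.L7
  have hz : tval 2 * z3 = tval 2 * tval 3 / 7 := by rw [h7]; ring
  rw [hz] at h5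
  linarith
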